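/- Suppose the disturbance and constraint sets are C-sets, G is strongly connected, there exist Γ ≥ 1, ρ ∈ (0,1) with ‖A_{σ_t}···A_{σ_1} x‖ ≤ Γ ρ^t ‖x‖ for every x and every admissible label sequence, and the minimal compact invariant multi-set satisfies S_m^j ⊆ int X_j for all j. Fix an integer T ≥ 1, and let {Š_M^j}_{j∈V} be the maximal admissible invariant multi-set of the T-product Lifted system (with the same constraint sets X_j) and {S_M^j}_{j∈V} that of the System. Then for every j ∈ V, S_M^j = Š_M^j ∩ ⋂ C(σ(j,d), Š_M^d), the intersection over all walks in G of some length between 1 and T−1 starting at j and ending at any node d, where C(σ(j,d), S) denotes the composition of the one-step backward maps along the label sequence σ(j,d). -/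

import Mathlib

open Set Pointwise Filter

noncomputable section

/-- One-step forward reachability map `R(σ,S) = A_σ S ⊕ W_σ`. -/
def reach {n N : ℕ} (A : Fin N → Matrix (Fin n) (Fin n) ℝ)
    (W : Fin N → Set (Fin n → ℝ)) (σ : Fin N) (S : Set (Fin n → ℝ)) : Set (Fin n → ℝ) :=
  (fun x => (A σ).mulVec x) '' S + W σ

/-- One-step nominal (disturbance-free) forward map `R_N(σ,S) = A_σ S`. -/
def reachN {n N : ℕ} (A : Fin N → Matrix (Fin n) (Fin n) ℝ)
    (σ : Fin N) (S : Set (Fin n → ℝ)) : Set (Fin n → ℝ) :=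
  (fun x => (A σ).mulVec x) '' S

/-- Forward reachability multi-set sequence: `F_0^j = {0}`,
`F_{l+1}^j = ⋃_{(s,j,σ)∈E} R(σ, F_l^s)`. -/
def fwdSeq {n N : ℕ} {V : Type*} (Edge : V → V → Fin N → Prop)
    (A : Fin N → Matrix (Fin n) (Fin n) ℝ) (W : Fin N → Set (Fin n → ℝ)) :
    ℕ → V → Set (Fin n → ℝ)
  | 0, _ => {0}
  | l + 1, j => ⋃ s : V, ⋃ σ : Fin N, ⋃ _ : Edge s j σ, reach A W σ (fwdSeq Edge A W l s)

/-- Nominal multi-set sequence: `N_0^j = ⋃_{(s,j,σ)∈E} W_σ`,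
`N_{l+1}^j = ⋃_{(s,j,σ)∈E} R_N(σ, N_l^s)`. -/
def nomSeq {n N : ℕ} {V : Type*} (Edge : V → V → Fin N → Prop)
    (A : Fin N → Matrix (Fin n) (Fin n) ℝ) (W : Fin N → Set (Fin n → ℝ)) :
    ℕ → V → Set (Fin n → ℝ)
  | 0, j => ⋃ s : V, ⋃ σ : Fin N, ⋃ _ : Edge s j σ, W σ
  | l + 1, j => ⋃ s : V, ⋃ σ : Fin N, ⋃ _ : Edge s j σ, reachN A σ (nomSeq Edge A W l s)

/-- A C-set: compact, convex, containing `0` in its interior. -/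
def IsCSet {n : ℕ} (S : Set (Fin n → ℝ)) : Prop :=
  IsCompact S ∧ Convex ℝ S ∧ (0 : Fin n → ℝ) ∈ interior S

/-- Walks in the labeled graph: `WalkFrom Edge i j σs` holds iff there is a walk
from `i` to `j` whose sequence of labels is `σs` (first label read first). -/
def WalkFrom {N : ℕ} {V : Type*} (Edge : V → V → Fin N → Prop) :
    V → V → List (Fin N) → Prop
  | i, j, [] => i = j
  | i, j, σ :: rest => ∃ k, Edge i k σ ∧ WalkFrom Edge k j rest

/-- Ordered matrix product `A_{σ_t} ⋯ A_{σ_1}` along a label sequence `[σ_1,…,σ_t]`. -/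
def matProd {n N : ℕ} (A : Fin N → Matrix (Fin n) (Fin n) ℝ) (σs : List (Fin N)) :
    Matrix (Fin n) (Fin n) ℝ :=
  σs.foldl (fun M σ => A σ * M) 1

/-- Exponential stability of the nominal system:
`‖A_{σ_t}⋯A_{σ_1} x‖ ≤ Γ ρ^t ‖x‖` for every admissible label sequence. -/
def ExpStable {n N : ℕ} {V : Type*} (Edge : V → V → Fin N → Prop)
    (A : Fin N → Matrix (Fin n) (Fin n) ℝ) (Γ ρ : ℝ) : Prop :=
  ∀ (i j : V) (σs : List (Fin N)), WalkFrom Edge i j σs →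
    ∀ x : Fin n → ℝ, ‖(matProd A σs).mulVec x‖ ≤ Γ * ρ ^ σs.length * ‖x‖

/-- A multi-set `{S^j}` is invariant if `R(σ, S^i) ⊆ S^j` for every edge `(i,j,σ)`. -/
def Invariant {n N : ℕ} {V : Type*} (Edge : V → V → Fin N → Prop)
    (A : Fin N → Matrix (Fin n) (Fin n) ℝ) (W : Fin N → Set (Fin n → ℝ))
    (S : V → Set (Fin n → ℝ)) : Prop :=
  ∀ i j σ, Edge i j σ → reach A W σ (S i) ⊆ S j

/-- Strong connectedness of the labeled graph. -/
def StronglyConnected {N : ℕ} {V : Type*} (Edge : V → V → Fin N → Prop) : Prop :=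
  ∀ i j : V, ∃ σs : List (Fin N), σs ≠ [] ∧ WalkFrom Edge i j σs

/-- Multi-step forward reachability map along a label list (first label applied first). -/
def reachList {n N : ℕ} (A : Fin N → Matrix (Fin n) (Fin n) ℝ)
    (W : Fin N → Set (Fin n → ℝ)) : List (Fin N) → Set (Fin n → ℝ) → Set (Fin n → ℝ)
  | [], S => S
  | σ :: rest, S => reachList A W rest (reach A W σ S)

/-- Multi-step nominal forward map along a label list (first label applied first). -/
def reachNList {n N : ℕ} (A : Fin N → Matrix (Fin n) (Fin n) ℝ) :
    List (Fin N) → Set (Fin n → ℝ) → Set (Fin n → ℝ)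
  | [], S => S
  | σ :: rest, S => reachNList A rest (reachN A σ S)

/-- Multi-step backward reachability map along a label sequence:
`C({σ_1,…,σ_p}, S) = {x : R({σ_1,…,σ_p},{x}) ⊆ S}`. -/
def bwdList {n N : ℕ} (A : Fin N → Matrix (Fin n) (Fin n) ℝ)
    (W : Fin N → Set (Fin n → ℝ)) (σs : List (Fin N)) (S : Set (Fin n → ℝ)) :
    Set (Fin n → ℝ) :=
  {x | reachList A W σs {x} ⊆ S}

/-- Invariance with respect to the T-product Lifted system: each lifted edge is a walk of
length `T` in `G`, and carries the composed reach map along its labels. -/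
def TLiftInvariant {n N : ℕ} {V : Type*} (Edge : V → V → Fin N → Prop)
    (A : Fin N → Matrix (Fin n) (Fin n) ℝ) (W : Fin N → Set (Fin n → ℝ))
    (T : ℕ) (S : V → Set (Fin n → ℝ)) : Prop :=
  ∀ (i j : V) (σs : List (Fin N)), WalkFrom Edge i j σs → σs.length = T →
    reachList A W σs (S i) ⊆ S j

lemma reach_mono {n N : ℕ} (A : Fin N → Matrix (Fin n) (Fin n) ℝ)
    (W : Fin N → Set (Fin n → ℝ)) (σ : Fin N) {S T : Set (Fin n → ℝ)} (h : S ⊆ T) :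
    reach A W σ S ⊆ reach A W σ T :=
  Set.add_subset_add (Set.image_mono h) Subset.rfl

lemma reachList_mono {n N : ℕ} (A : Fin N → Matrix (Fin n) (Fin n) ℝ)
    (W : Fin N → Set (Fin n → ℝ)) : ∀ (σs : List (Fin N)) {S T : Set (Fin n → ℝ)},
    S ⊆ T → reachList A W σs S ⊆ reachList A W σs T
  | [], _, _, h => h
  | σ :: rest, _, _, h => reachList_mono A W rest (reach_mono A W σ h)

lemma invariant_reachList {n N : ℕ} {V : Type*} {Edge : V → V → Fin N → Prop}
    {A : Fin N → Matrix (Fin n) (Fin n) ℝ} {W : Fin N → Set (Fin n → ℝ)}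
    {S : V → Set (Fin n → ℝ)} (hS : Invariant Edge A W S) :
    ∀ (σs : List (Fin N)) (i j : V), WalkFrom Edge i j σs →
      reachList A W σs (S i) ⊆ S j
  | [], i, j, h => by cases h; exact Subset.rfl
  | σ :: rest, i, j, ⟨k, he, hw⟩ =>
      (reachList_mono A W rest (hS i k σ he)).trans
        (invariant_reachList hS rest k j hw)

lemma mem_reach_split {n N : ℕ} {A : Fin N → Matrix (Fin n) (Fin n) ℝ}
    {W : Fin N → Set (Fin n → ℝ)} {σ : Fin N} {S : Set (Fin n → ℝ)} {x : Fin n → ℝ}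
    (hx : x ∈ reach A W σ S) : ∃ y ∈ S, x ∈ reach A W σ {y} := by
  obtain ⟨a, ⟨y, hy, rfl⟩, w, hw, rfl⟩ := hx
  exact ⟨y, hy, Set.add_mem_add ⟨y, rfl, rfl⟩ hw⟩

/-- the maximal admissible invariant multi-set of the System is recovered from
that of the T-product Lifted system via
`S_M^j = Š_M^j ∩ ⋂ C(σ(j,d), Š_M^d)`, the intersection over all walks of length
`1 ≤ ⋅ ≤ T−1` starting at `j`. -/
theorem stmt18 {n N : ℕ} {V : Type*} (Edge : V → V → Fin N → Prop)
    (A : Fin N → Matrix (Fin n) (Fin n) ℝ) (W : Fin N → Set (Fin n → ℝ))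
    (X : V → Set (Fin n → ℝ))
    (hW : ∀ σ : Fin N, IsCSet (W σ)) (hX : ∀ j : V, IsCSet (X j))
    (hconn : StronglyConnected Edge)
    (Γ ρ : ℝ) (hΓ : 1 ≤ Γ) (hρ : ρ ∈ Set.Ioo (0 : ℝ) 1)
    (hstab : ExpStable Edge A Γ ρ)
    (Sm : V → Set (Fin n → ℝ))
    (hSmInv : Invariant Edge A W Sm)
    (hSmCpt : ∀ j : V, IsCompact (Sm j))
    (hSmMin : ∀ S : V → Set (Fin n → ℝ), Invariant Edge A W S →
      (∀ j, IsCompact (S j)) → ∀ j, Sm j ⊆ S j)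
    (hSmInt : ∀ j : V, Sm j ⊆ interior (X j))
    (T : ℕ) (hT : 1 ≤ T)
    (SM : V → Set (Fin n → ℝ))
    (hSMInv : Invariant Edge A W SM)
    (hSMAdm : ∀ j : V, SM j ⊆ X j)
    (hSMMax : ∀ S : V → Set (Fin n → ℝ), Invariant Edge A W S → (∀ j, S j ⊆ X j) →
      ∀ j, S j ⊆ SM j)
    (SMT : V → Set (Fin n → ℝ))
    (hSMTInv : TLiftInvariant Edge A W T SMT)
    (hSMTAdm : ∀ j : V, SMT j ⊆ X j)
    (hSMTMax : ∀ S : V → Set (Fin n → ℝ), TLiftInvariant Edge A W T S →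
      (∀ j, S j ⊆ X j) → ∀ j, S j ⊆ SMT j) :
    ∀ j : V,
      SM j = SMT j ∩ ⋂ d : V, ⋂ σs : List (Fin N),
        ⋂ _ : WalkFrom Edge j d σs ∧ 1 ≤ σs.length ∧ σs.length ≤ T - 1,
        bwdList A W σs (SMT d) := by
  have hSMT' : TLiftInvariant Edge A W T SM := fun i j σs hw _ =>
    invariant_reachList hSMInv σs i j hw
  have hSMsub : ∀ j, SM j ⊆ SMT j := hSMTMax SM hSMT' hSMAdm
  intro j
  apply Subset.antisymm
  · intro x hx
    refine ⟨hSMsub j hx, ?_⟩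
    simp only [Set.mem_iInter]
    rintro d σs ⟨hw, _, _⟩ z hz
    exact hSMsub d (invariant_reachList hSMInv σs j d hw
      (reachList_mono A W σs (Set.singleton_subset_iff.2 hx) hz))
  · set R : V → Set (Fin n → ℝ) := fun j => SMT j ∩ ⋂ d : V, ⋂ σs : List (Fin N),
        ⋂ _ : WalkFrom Edge j d σs ∧ 1 ≤ σs.length ∧ σs.length ≤ T - 1,
        bwdList A W σs (SMT d) with hRdef
    have hRinv : Invariant Edge A W R := by
      intro i j σ he x hx
      obtain ⟨y, hy, hxy⟩ := mem_reach_split hx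
      have hySMT : y ∈ SMT i := hy.1
      have hybwd : ∀ d σs, WalkFrom Edge i d σs → 1 ≤ σs.length → σs.length ≤ T - 1 →
          reachList A W σs {y} ⊆ SMT d := by
        intro d σs hw h1 h2
        exact Set.mem_iInter.1 (Set.mem_iInter.1 (Set.mem_iInter.1 hy.2 d) σs) ⟨hw, h1, h2⟩
      have hxy' : x ∈ reachList A W [σ] {y} := hxy
      constructor
      · rcases eq_or_lt_of_le hT with h1 | h2
        · exact hSMTInv i j [σ] ⟨j, he, rfl⟩ (by simp [← h1])
            (reachList_mono A W [σ] (Set.singleton_subset_iff.2 hySMT) hxy')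
        · exact hybwd j [σ] ⟨j, he, rfl⟩ (by simp) (by simp; omega) hxy'
      · simp only [Set.mem_iInter]
        rintro d σs ⟨hw, h1, h2⟩
        intro z hz
        have hsub : reachList A W σs {x} ⊆ reachList A W (σ :: σs) {y} :=
          reachList_mono A W σs (Set.singleton_subset_iff.2 hxy)
        rcases le_or_gt (σs.length + 1) (T - 1) with hc | hc
        · exact hybwd d (σ :: σs) ⟨j, he, hw⟩ (by simp) (by simpa using hc) (hsub hz)
        · have hlen : (σ :: σs).length = T := by simp; omega
          exact hSMTInv i d (σ :: σs) ⟨j, he, hw⟩ hlen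
            (reachList_mono A W (σ :: σs) (Set.singleton_subset_iff.2 hySMT) (hsub hz))
    have hRadm : ∀ j, R j ⊆ X j := fun j => Set.inter_subset_left.trans (hSMTAdm j)
    exact hSMMax R hRinv hRadm j
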